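/- For every β ∈ [1,2) and every b ∈ ℕ, G(β) ≤ 1/(2^b·β) − h(1/(2^{b+1}·β)). (Consequently, for n = β·2^k, q(n) ≥ 2^{(h(1/(2^{b+1}β)) − 1/(2^bβ))·n − o(n)}.) -/

import Mathlib

/-- The binary entropy function, `h(p) = p log₂(1/p) + (1-p) log₂(1/(1-p))`,
with the convention `h(0) = h(1) = 0` (automatic since `1/0 = 0` and `logb 2 0 = 0`). -/
noncomputable def binH (p : ℝ) : ℝ :=
  p * Real.logb 2 (1 / p) + (1 - p) * Real.logb 2 (1 / (1 - p))

/-- `(c, b) ∈ C(β)`: `c : ℕ → [0,1]`, `∑ cᵢ/2ⁱ = 1/(β·2ᵇ)` and `∑ cᵢ ≤ 1`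
(the latter expressed via partial sums, which is equivalent for nonnegative terms). -/
def memC (β : ℝ) (c : ℕ → ℝ) (b : ℕ) : Prop :=
  (∀ i, c i ∈ Set.Icc (0 : ℝ) 1) ∧
  (∑' i : ℕ, c i / 2 ^ i) = 1 / (β * 2 ^ b) ∧
  ∀ n : ℕ, (∑ i ∈ Finset.range n, c i) ≤ 1

/-- `α ∈ A(c,b)`: `α : ℕ → [0,1]` with `∑ αᵢ cᵢ / 2ⁱ = 1/(β·2^{b+1})`. -/
def memA (β : ℝ) (b : ℕ) (c α : ℕ → ℝ) : Prop :=
  (∀ i, α i ∈ Set.Icc (0 : ℝ) 1) ∧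
  (∑' i : ℕ, α i * c i / 2 ^ i) = 1 / (β * 2 ^ (b + 1))

/-- `P(c,α) = ∑ h(αᵢ)·cᵢ − h(∑ αᵢ·cᵢ)`. -/
noncomputable def Pfun (c α : ℕ → ℝ) : ℝ :=
  (∑' i : ℕ, binH (α i) * c i) - binH (∑' i : ℕ, α i * c i)

/-- `sup_{α ∈ A(c,b)} P(c,α)`. -/
noncomputable def supP (β : ℝ) (b : ℕ) (c : ℕ → ℝ) : ℝ :=
  sSup {y | ∃ α, memA β b c α ∧ y = Pfun c α}

/-- `G(β) = inf_{(c,b) ∈ C(β)} sup_{α ∈ A(c,b)} P(c,α)`. -/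
noncomputable def Gfun (β : ℝ) : ℝ :=
  sInf {y | ∃ c b, memC β c b ∧ y = supP β b c}

lemma binH_eq (p : ℝ) : binH p = Real.binEntropy p / Real.log 2 := by
  unfold binH Real.binEntropy Real.logb
  rw [one_div, one_div]
  ring

lemma binH_le_one (p : ℝ) : binH p ≤ 1 := by
  rw [binH_eq, div_le_one (Real.log_pos one_lt_two)]
  exact Real.binEntropy_le_log_two

lemma binH_nonneg {p : ℝ} (h0 : 0 ≤ p) (h1 : p ≤ 1) : 0 ≤ binH p := by
  rw [binH_eq]
  exact div_nonneg (Real.binEntropy_nonneg h0 h1) (Real.log_pos one_lt_two).le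

lemma binH_half : binH (1 / 2) = 1 := by
  have h2 : Real.logb 2 2 = 1 := Real.logb_self_eq_one (by norm_num)
  unfold binH
  norm_num [h2]

lemma Pfun_ge_neg_one {β : ℝ} {b : ℕ} {c α : ℕ → ℝ} (hc : memC β c b)
    (hα : memA β b c α) : -1 ≤ Pfun c α := by
  have h1 : 0 ≤ ∑' i : ℕ, binH (α i) * c i := by
    apply tsum_nonneg
    intro i
    exact mul_nonneg (binH_nonneg (hα.1 i).1 (hα.1 i).2) (hc.1 i).1
  have h2 : binH (∑' i : ℕ, α i * c i) ≤ 1 := binH_le_one _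
  unfold Pfun
  linarith

theorem G_le_of_b (β : ℝ) (hβ : β ∈ Set.Ico (1 : ℝ) 2) (b : ℕ) :
    Gfun β ≤ 1 / (2 ^ b * β) - binH (1 / (2 ^ (b + 1) * β)) := by
  obtain ⟨hβ1, hβ2⟩ := hβ
  have hβ0 : (0 : ℝ) < β := by linarith
  set c0 : ℝ := 1 / (β * 2 ^ b) with hc0
  have hc0pos : 0 < c0 := by positivity
  have hc0le : c0 ≤ 1 := by
    rw [hc0, div_le_one (by positivity)]
    have : (1 : ℝ) ≤ 2 ^ b := one_le_pow₀ (by norm_num)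
    nlinarith
  set c : ℕ → ℝ := fun i => if i = 0 then c0 else 0 with hc
  have hcmem : memC β c b := by
    refine ⟨fun i => ?_, ?_, fun n => ?_⟩
    · by_cases h : i = 0 <;> simp [hc, h, hc0pos.le, hc0le]
    · rw [tsum_eq_single 0 (fun i hi => by simp [hc, hi])]
      simp [hc]
      rw [hc0]; ring
    · rw [show (∑ i ∈ Finset.range n, c i) = ∑ i ∈ Finset.range n, if i = 0 then c0 else 0
        from rfl]
      rw [Finset.sum_ite_eq' (Finset.range n) 0 (fun _ => c0)]
      split <;> simp [hc0le]
  -- every α in A(c,b) gives the same P value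
  have key : ∀ α, memA β b c α → Pfun c α = c0 - binH (c0 / 2) := by
    intro α hα
    have hsum : (∑' i : ℕ, α i * c i / 2 ^ i) = α 0 * c0 := by
      rw [tsum_eq_single 0 (fun i hi => by simp [hc, hi])]
      simp [hc]
    have hα0 : α 0 = 1 / 2 := by
      have := hα.2
      rw [hsum] at this
      have h2 : (1 : ℝ) / (β * 2 ^ (b + 1)) = c0 / 2 := by
        rw [hc0, pow_succ]; field_simp
      rw [h2] at this
      field_simp at this ⊢
      nlinarith [hc0pos]
    have ht1 : (∑' i : ℕ, binH (α i) * c i) = binH (α 0) * c0 := by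
      rw [tsum_eq_single 0 (fun i hi => by simp [hc, hi])]
      simp [hc]
    have ht2 : (∑' i : ℕ, α i * c i) = α 0 * c0 := by
      rw [tsum_eq_single 0 (fun i hi => by simp [hc, hi])]
      simp [hc]
    unfold Pfun
    rw [ht1, ht2, hα0, binH_half]
    ring_nf
  -- A(c,b) is nonempty
  have hA : memA β b c (fun _ => 1 / 2) := by
    refine ⟨fun i => ⟨by norm_num, by norm_num⟩, ?_⟩
    rw [tsum_eq_single 0 (fun i hi => by simp [hc, hi])]
    simp only [hc, ↓reduceIte]
    rw [hc0, pow_succ]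
    field_simp
  have hset : {y | ∃ α, memA β b c α ∧ y = Pfun c α} = {c0 - binH (c0 / 2)} := by
    ext y
    constructor
    · rintro ⟨α, hα, rfl⟩
      exact key α hα
    · rintro rfl
      exact ⟨fun _ => 1 / 2, hA, (key _ hA).symm⟩
  have hsupP : supP β b c = c0 - binH (c0 / 2) := by
    rw [supP, hset, csSup_singleton]
  have htarget : c0 - binH (c0 / 2) = 1 / (2 ^ b * β) - binH (1 / (2 ^ (b + 1) * β)) := by
    have h1 : c0 = 1 / (2 ^ b * β) := by rw [hc0, mul_comm]
    have h2 : c0 / 2 = 1 / (2 ^ (b + 1) * β) := by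
      rw [hc0, pow_succ]; field_simp
    rw [h2, h1]
  -- the G set is bounded below by -1
  have hbdd : BddBelow {y | ∃ c b, memC β c b ∧ y = supP β b c} := by
    refine ⟨-1, ?_⟩
    rintro y ⟨c', b', hc', rfl⟩
    rw [supP]
    set S := {y | ∃ α, memA β b' c' α ∧ y = Pfun c' α} with hS
    by_cases hne : S.Nonempty
    · by_cases hba : BddAbove S
      · obtain ⟨z, hz⟩ := hne
        obtain ⟨α, hα, rfl⟩ := hz
        exact le_trans (Pfun_ge_neg_one hc' hα) (le_csSup hba ⟨α, hα, rfl⟩)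
      · rw [Real.sSup_of_not_bddAbove hba]; norm_num
    · rw [Set.not_nonempty_iff_eq_empty] at hne
      rw [hne, Real.sSup_empty]; norm_num
  calc Gfun β ≤ supP β b c := csInf_le hbdd ⟨c, b, hcmem, rfl⟩
    _ = _ := by rw [hsupP, htarget]
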